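/- arXiv:1701.08298 — 4 statements merged into one kernel-verified Lean document; each statement's English description precedes it below -/
import Mathlib

section
/- Let μ = N(0, Q) be a Gaussian measure on an infinite-dimensional separable Hilbert space H with injective trace-class covariance Q. Then μ(Q^{1/2}(H)) = 0, i.e., the Gaussian measure assigns measure zero to its Cameron–Martin space. -/
open MeasureTheory ProbabilityTheory
open scoped InnerProductSpace

variable {H : Type*} [NormedAddCommGroup H] [InnerProductSpace ℝ H] [CompleteSpace H]
  [MeasurableSpace H] [BorelSpace H]

/-- `μ` is a Gaussian measure with mean `m` and covariance `P`. -/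
def IsGaussianMeasure (μ : Measure H) (m : H) (P : H →L[ℝ] H) : Prop :=
  ∀ l : H, μ.map (fun x => ⟪l, x⟫_ℝ) = gaussianReal ⟪l, m⟫_ℝ (Real.toNNReal ⟪l, P l⟫_ℝ)

/-- A positive operator has finite trace. -/
def HasFiniteTrace (B : H →L[ℝ] H) : Prop :=
  ∃ e : HilbertBasis ℕ ℝ H, Summable (fun i => ⟪B (e i), e i⟫_ℝ)

open Real Filter Set Topology
open scoped ENNReal NNReal

set_option linter.unusedSectionVars false

namespace CMaux


lemma integrable_pow_mul_gauss (n : ℕ) :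
    Integrable (fun x : ℝ => x ^ n * Real.exp (-(1/2) * x ^ 2)) := by
  have h := integrable_rpow_mul_exp_neg_mul_sq (by norm_num : (0:ℝ) < 1/2)
    (s := (n : ℝ)) (lt_of_lt_of_le (by norm_num) (Nat.cast_nonneg n))
  refine h.congr (ae_of_all _ fun x => ?_)
  simp only [Real.rpow_natCast]

lemma tendsto_pow_mul_gauss (n : ℕ) :
    Tendsto (fun x : ℝ => x ^ n * Real.exp (-(1/2) * x ^ 2)) atTop (𝓝 0) := by
  have h := rpow_mul_exp_neg_mul_sq_isLittleO_exp_neg (by norm_num : (0:ℝ) < 1/2) (n : ℝ)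
  have h2 : Tendsto (fun x : ℝ => Real.exp (-(1/2) * x)) atTop (𝓝 0) := by
    apply Real.tendsto_exp_atBot.comp
    apply Tendsto.const_mul_atTop_of_neg (by norm_num : (-(1/2) : ℝ) < 0) tendsto_id
  have h3 := h.isBigO.trans_tendsto h2
  refine h3.congr fun x => ?_
  simp only [Real.rpow_natCast]

lemma tendsto_poly_gauss (n : ℕ) (c : ℝ) :
    Tendsto (fun x : ℝ => c * x ^ n * Real.exp (-(1/2) * x ^ 2)) atTop (𝓝 0) := by
  have h := (tendsto_pow_mul_gauss n).const_mul c
  rw [mul_zero] at h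
  refine h.congr fun x => by ring

lemma tendsto_poly_gauss_bot (n : ℕ) (c : ℝ) :
    Tendsto (fun x : ℝ => c * x ^ n * Real.exp (-(1/2) * x ^ 2)) atBot (𝓝 0) := by
  have h := (tendsto_poly_gauss n (c * (-1)^n)).comp tendsto_neg_atBot_atTop
  refine Tendsto.congr (fun x => ?_) h
  simp only [Function.comp, neg_sq]
  ring_nf
  rw [mul_comm n 2, pow_mul]
  norm_num

lemma integral_eq_zero_of_deriv (F f : ℝ → ℝ) (hF : ∀ x, HasDerivAt F (f x) x)
    (hf : Integrable f) (htop : Tendsto F atTop (𝓝 0)) (hbot : Tendsto F atBot (𝓝 0)) :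
    ∫ x, f x = 0 := by
  have h1 : ∫ x in Iic (0:ℝ), f x = F 0 - 0 :=
    integral_Iic_of_hasDerivAt_of_tendsto' (fun x _ => hF x) hf.integrableOn hbot
  have h2 : ∫ x in Ioi (0:ℝ), f x = 0 - F 0 :=
    integral_Ioi_of_hasDerivAt_of_tendsto' (fun x _ => hF x) hf.integrableOn htop
  have h3 := integral_add_compl (measurableSet_Iic (a := (0:ℝ))) hf
  rw [Set.compl_Iic] at h3
  rw [← h3, h1, h2]; ring

lemma integral_sq_sub_one_gauss :
    ∫ x : ℝ, (x ^ 2 - 1) * Real.exp (-(1/2) * x ^ 2) = 0 := by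
  have hf : Integrable (fun x : ℝ => (x ^ 2 - 1) * Real.exp (-(1/2) * x ^ 2)) := by
    have := (integrable_pow_mul_gauss 2).sub (integrable_pow_mul_gauss 0)
    refine this.congr (ae_of_all _ fun x => ?_); simp; ring
  refine integral_eq_zero_of_deriv (fun x => -x * Real.exp (-(1/2) * x ^ 2)) _ ?_ hf ?_ ?_
  · intro x
    have hexp : HasDerivAt (fun x : ℝ => Real.exp (-(1/2) * x ^ 2))
        (Real.exp (-(1/2) * x ^ 2) * (-(1/2) * (2 * x ^ 1))) x :=
      (((hasDerivAt_pow 2 x).const_mul (-(1/2) : ℝ)).exp)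
    have h1 : HasDerivAt (fun x : ℝ => -x) (-1) x := (hasDerivAt_id x).neg
    have h2 := h1.mul hexp
    exact h2.congr_deriv (by ring)
  · exact (tendsto_poly_gauss 1 (-1)).congr fun x => by ring
  · exact (tendsto_poly_gauss_bot 1 (-1)).congr fun x => by ring

lemma integral_pow4_sub_gauss :
    ∫ x : ℝ, (x ^ 4 - 3 * x ^ 2) * Real.exp (-(1/2) * x ^ 2) = 0 := by
  have hf : Integrable (fun x : ℝ => (x ^ 4 - 3 * x ^ 2) * Real.exp (-(1/2) * x ^ 2)) := by
    have := (integrable_pow_mul_gauss 4).sub ((integrable_pow_mul_gauss 2).const_mul 3)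
    refine this.congr (ae_of_all _ fun x => ?_); simp; ring
  refine integral_eq_zero_of_deriv (fun x => -x^3 * Real.exp (-(1/2) * x ^ 2)) _ ?_ hf ?_ ?_
  · intro x
    have hexp : HasDerivAt (fun x : ℝ => Real.exp (-(1/2) * x ^ 2))
        (Real.exp (-(1/2) * x ^ 2) * (-(1/2) * (2 * x ^ 1))) x :=
      (((hasDerivAt_pow 2 x).const_mul (-(1/2) : ℝ)).exp)
    have h1 : HasDerivAt (fun x : ℝ => -x^3) (-(3 * x ^ 2)) x := by
      exact (hasDerivAt_pow 3 x).neg.congr_deriv (by norm_num)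
    have h2 := h1.mul hexp
    exact h2.congr_deriv (by ring)
  · exact (tendsto_poly_gauss 3 (-1)).congr fun x => by ring
  · exact (tendsto_poly_gauss_bot 3 (-1)).congr fun x => by ring




lemma gaussianPDFReal_zero_one (x : ℝ) :
    gaussianPDFReal 0 1 x = (Real.sqrt (2 * π))⁻¹ * Real.exp (-(1/2) * x ^ 2) := by
  simp only [gaussianPDFReal, NNReal.coe_one, mul_one, sub_zero]
  congr 1
  congr 1
  ring

lemma integral_gaussianReal_eq (g : ℝ → ℝ) :
    ∫ x, g x ∂(gaussianReal 0 1) = ∫ x, gaussianPDFReal 0 1 x * g x := by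
  rw [gaussianReal_of_var_ne_zero 0 one_ne_zero, gaussianPDF_def]
  have hm : AEMeasurable (fun x => (gaussianPDFReal 0 1 x).toNNReal) volume :=
    (measurable_gaussianPDFReal 0 1).real_toNNReal.aemeasurable
  have : (fun x => ENNReal.ofReal (gaussianPDFReal 0 1 x))
      = fun x => ((gaussianPDFReal 0 1 x).toNNReal : ℝ≥0∞) := rfl
  rw [this, integral_withDensity_eq_integral_smul₀ hm g]
  congr 1 with x
  rw [NNReal.smul_def, Real.coe_toNNReal _ (gaussianPDFReal_nonneg 0 1 x), smul_eq_mul]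

lemma integrable_gaussianReal_iff (g : ℝ → ℝ) :
    Integrable g (gaussianReal 0 1) ↔ Integrable (fun x => gaussianPDFReal 0 1 x * g x) := by
  rw [gaussianReal_of_var_ne_zero 0 one_ne_zero, gaussianPDF_def]
  have hm : AEMeasurable (fun x => (gaussianPDFReal 0 1 x).toNNReal) volume :=
    (measurable_gaussianPDFReal 0 1).real_toNNReal.aemeasurable
  have : (fun x => ENNReal.ofReal (gaussianPDFReal 0 1 x))
      = fun x => ((gaussianPDFReal 0 1 x).toNNReal : ℝ≥0∞) := rfl
  rw [this, integrable_withDensity_iff_integrable_smul₀ hm]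
  constructor <;> intro h <;> refine h.congr (ae_of_all _ fun x => ?_) <;>
    simp only [NNReal.smul_def, Real.coe_toNNReal _ (gaussianPDFReal_nonneg 0 1 x), smul_eq_mul]

lemma integrable_pow_gaussianReal01 (n : ℕ) :
    Integrable (fun x : ℝ => x ^ n) (gaussianReal 0 1) := by
  rw [integrable_gaussianReal_iff]
  have := (integrable_pow_mul_gauss n).const_mul (Real.sqrt (2 * π))⁻¹
  refine this.congr (ae_of_all _ fun x => ?_)
  simp only [gaussianPDFReal_zero_one]; ring

lemma sqrt_two_pi_pos : 0 < Real.sqrt (2 * π) :=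
  Real.sqrt_pos.mpr (by positivity)

lemma integral_exp_gauss : ∫ x : ℝ, Real.exp (-(1/2) * x ^ 2) = Real.sqrt (2 * π) := by
  have h := integral_gaussian (1/2 : ℝ)
  have : π / (1/2 : ℝ) = 2 * π := by ring
  rwa [this] at h

lemma integral_sq_gauss : ∫ x : ℝ, x ^ 2 * Real.exp (-(1/2) * x ^ 2) = Real.sqrt (2 * π) := by
  have h1 : Integrable (fun x : ℝ => (x ^ 2 - 1) * Real.exp (-(1/2) * x ^ 2)) := by
    have := (integrable_pow_mul_gauss 2).sub (integrable_pow_mul_gauss 0)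
    refine this.congr (ae_of_all _ fun x => ?_); simp; ring
  have h2 : Integrable (fun x : ℝ => Real.exp (-(1/2) * x ^ 2)) := by
    have := integrable_pow_mul_gauss 0
    refine this.congr (ae_of_all _ fun x => ?_); simp
  have h3 := integral_add h1 h2
  simp only [integral_sq_sub_one_gauss, integral_exp_gauss, zero_add] at h3
  rw [← h3]
  congr 1 with x
  ring

lemma integral_pow4_gauss :
    ∫ x : ℝ, x ^ 4 * Real.exp (-(1/2) * x ^ 2) = 3 * Real.sqrt (2 * π) := by
  have h1 : Integrable (fun x : ℝ => (x ^ 4 - 3 * x ^ 2) * Real.exp (-(1/2) * x ^ 2)) := by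
    have := (integrable_pow_mul_gauss 4).sub ((integrable_pow_mul_gauss 2).const_mul 3)
    refine this.congr (ae_of_all _ fun x => ?_); simp; ring
  have h2 : Integrable (fun x : ℝ => 3 * (x ^ 2 * Real.exp (-(1/2) * x ^ 2))) :=
    (integrable_pow_mul_gauss 2).const_mul 3
  have h3 := integral_add h1 h2
  rw [integral_pow4_sub_gauss, integral_const_mul, integral_sq_gauss, zero_add] at h3
  rw [← h3]
  congr 1 with x
  ring

lemma integral_sq_gaussianReal01 : ∫ x : ℝ, x ^ 2 ∂(gaussianReal 0 1) = 1 := by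
  rw [integral_gaussianReal_eq]
  have : ∀ x : ℝ, gaussianPDFReal 0 1 x * x ^ 2
      = (Real.sqrt (2 * π))⁻¹ * (x ^ 2 * Real.exp (-(1/2) * x ^ 2)) := fun x => by
    rw [gaussianPDFReal_zero_one]; ring
  simp_rw [this]
  rw [integral_const_mul, integral_sq_gauss, inv_mul_cancel₀ sqrt_two_pi_pos.ne']

lemma integral_pow4_gaussianReal01 : ∫ x : ℝ, x ^ 4 ∂(gaussianReal 0 1) = 3 := by
  rw [integral_gaussianReal_eq]
  have : ∀ x : ℝ, gaussianPDFReal 0 1 x * x ^ 4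
      = (Real.sqrt (2 * π))⁻¹ * (x ^ 4 * Real.exp (-(1/2) * x ^ 2)) := fun x => by
    rw [gaussianPDFReal_zero_one]; ring
  simp_rw [this]
  rw [integral_const_mul, integral_pow4_gauss]
  field_simp




lemma gaussianReal_eq_map (v : ℝ≥0) :
    gaussianReal 0 v = (gaussianReal 0 1).map (fun x => Real.sqrt v * x) := by
  have h := gaussianReal_map_const_mul (μ := 0) (v := 1) (Real.sqrt v)
  rw [mul_zero] at h
  have h2 : (NNReal.mk ((Real.sqrt v)^2) (sq_nonneg _) * 1 : ℝ≥0) = v := by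
    ext; simp [Real.sq_sqrt v.coe_nonneg]
  rw [h2] at h
  exact h.symm

lemma integrable_pow_gaussianReal (v : ℝ≥0) (n : ℕ) :
    Integrable (fun x : ℝ => x ^ n) (gaussianReal 0 v) := by
  rw [gaussianReal_eq_map]
  rw [integrable_map_measure (continuous_pow n).aestronglyMeasurable
    (measurable_const_mul _).aemeasurable]
  have := (integrable_pow_gaussianReal01 n).const_mul ((Real.sqrt v) ^ n)
  refine this.congr (ae_of_all _ fun x => ?_)
  simp [Function.comp, mul_pow]

lemma integral_sq_gaussianReal (v : ℝ≥0) : ∫ x : ℝ, x ^ 2 ∂(gaussianReal 0 v) = v := by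
  rw [gaussianReal_eq_map, integral_map (measurable_const_mul _).aemeasurable
    (continuous_pow 2).aestronglyMeasurable]
  simp_rw [mul_pow]
  rw [integral_const_mul, integral_sq_gaussianReal01, mul_one, Real.sq_sqrt v.coe_nonneg]

lemma integral_pow4_gaussianReal (v : ℝ≥0) :
    ∫ x : ℝ, x ^ 4 ∂(gaussianReal 0 v) = 3 * (v : ℝ) ^ 2 := by
  rw [gaussianReal_eq_map, integral_map (measurable_const_mul _).aemeasurable
    (continuous_pow 4).aestronglyMeasurable]
  simp_rw [mul_pow]
  rw [integral_const_mul, integral_pow4_gaussianReal01]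
  have h4 : (Real.sqrt v) ^ 4 = (v : ℝ) ^ 2 := by
    rw [show 4 = 2 * 2 from rfl, pow_mul, Real.sq_sqrt v.coe_nonneg]
  rw [h4]; ring

lemma moments (μ : Measure H) (Q : H →L[ℝ] H) (hG : IsGaussianMeasure μ 0 Q) (l : H) :
    Integrable (fun x => ⟪l, x⟫_ℝ ^ 2) μ ∧ Integrable (fun x => ⟪l, x⟫_ℝ ^ 4) μ ∧
    ∫ x, ⟪l, x⟫_ℝ ^ 2 ∂μ = ((Real.toNNReal ⟪l, Q l⟫_ℝ : ℝ≥0) : ℝ) ∧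
    ∫ x, ⟪l, x⟫_ℝ ^ 4 ∂μ = 3 * ((Real.toNNReal ⟪l, Q l⟫_ℝ : ℝ≥0) : ℝ) ^ 2 := by
  have hm := hG l
  rw [inner_zero_right] at hm
  have hφ : AEMeasurable (fun x => ⟪l, x⟫_ℝ) μ :=
    (Continuous.inner continuous_const continuous_id).measurable.aemeasurable
  have key : ∀ n : ℕ, Integrable (fun x => ⟪l, x⟫_ℝ ^ n) μ ∧
      ∫ x, ⟪l, x⟫_ℝ ^ n ∂μ = ∫ y, y ^ n ∂(gaussianReal 0 (Real.toNNReal ⟪l, Q l⟫_ℝ)) := by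
    intro n
    constructor
    · have h := (integrable_map_measure (continuous_pow n).aestronglyMeasurable hφ).mp
        (by rw [hm]; exact integrable_pow_gaussianReal _ n)
      exact h
    · rw [← hm, integral_map hφ (continuous_pow n).aestronglyMeasurable]
  refine ⟨(key 2).1, (key 4).1, ?_, ?_⟩
  · rw [(key 2).2, integral_sq_gaussianReal]
  · rw [(key 4).2, integral_pow4_gaussianReal]

end CMaux

theorem stmt6 [TopologicalSpace.SeparableSpace H] (hinf : ¬ FiniteDimensional ℝ H)
    (μ : Measure H) [IsProbabilityMeasure μ]
    (Q SQ : H →L[ℝ] H)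
    (hQsa : IsSelfAdjoint Q) (hQpos : ∀ u, 0 ≤ ⟪Q u, u⟫_ℝ) (hQtr : HasFiniteTrace Q)
    (hQinj : Function.Injective Q)
    (hSQsa : IsSelfAdjoint SQ) (hSQpos : ∀ u, 0 ≤ ⟪SQ u, u⟫_ℝ) (hSQ : SQ ∘L SQ = Q)
    (hG : IsGaussianMeasure μ 0 Q) :
    μ (Set.range SQ) = 0 := by
  classical
  -- basic operator identities
  have hSQapp : ∀ u w : H, ⟪SQ u, w⟫_ℝ = ⟪u, SQ w⟫_ℝ := by
    intro u w
    have h := ContinuousLinearMap.isSelfAdjoint_iff'.mp hSQsa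
    calc ⟪SQ u, w⟫_ℝ = ⟪(ContinuousLinearMap.adjoint SQ) u, w⟫_ℝ := by rw [h]
    _ = ⟪u, SQ w⟫_ℝ := ContinuousLinearMap.adjoint_inner_left SQ w u
  have hQapp : ∀ u : H, Q u = SQ (SQ u) := fun u => by rw [← hSQ]; rfl
  have hquad : ∀ u : H, ⟪u, Q u⟫_ℝ = ⟪SQ u, SQ u⟫_ℝ := fun u => by
    rw [hQapp, ← hSQapp]
  have hSQinj : Function.Injective SQ := by
    intro a b hab
    apply hQinj
    rw [hQapp, hQapp, hab]
  -- the range of SQ is infinite dimensional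
  have hWfd : ¬ FiniteDimensional ℝ (LinearMap.range (SQ.toLinearMap)) := by
    intro hfd
    have e := LinearEquiv.ofInjective (SQ.toLinearMap) hSQinj
    exact hinf (Module.Finite.equiv e.symm)
  -- an orthonormal sequence inside the range of SQ
  have hbi : (Module.Basis.ofVectorSpaceIndex ℝ (LinearMap.range (SQ.toLinearMap))).Infinite := by
    by_contra hfin
    rw [Set.not_infinite] at hfin
    have := hfin.fintype
    exact hWfd (Module.Finite.of_basis
      (Module.Basis.ofVectorSpace ℝ (LinearMap.range (SQ.toLinearMap))))
  set W := LinearMap.range (SQ.toLinearMap) with hWdef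
  let emb := hbi.natEmbedding
  let g : ℕ → W := fun n => Module.Basis.ofVectorSpace ℝ W (emb n)
  have hgli : LinearIndependent ℝ g :=
    (Module.Basis.ofVectorSpace ℝ W).linearIndependent.comp emb emb.injective
  let f' : ℕ → W := InnerProductSpace.gramSchmidtNormed ℝ g
  have hon' : Orthonormal ℝ f' := InnerProductSpace.gramSchmidtNormed_orthonormal hgli
  let f : ℕ → H := fun n => (f' n : H)
  have hon : Orthonormal ℝ f := by
    rw [orthonormal_iff_ite] at hon' ⊢
    intro i j
    have h := hon' i j
    rwa [Submodule.coe_inner] at h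
  have hch : ∀ n, ∃ y, SQ y = f n := fun n => LinearMap.mem_range.mp (f' n).2
  let l : ℕ → H := fun n => (hch n).choose
  have hl : ∀ n, SQ (l n) = f n := fun n => (hch n).choose_spec
  -- quadratic form values
  have hfij : ∀ i j : ℕ, ⟪f i, f j⟫_ℝ = if i = j then 1 else 0 :=
    fun i j => orthonormal_iff_ite.mp hon i j
  have hkey : ∀ (i j : ℕ), i ≠ j → ∀ a b : ℝ,
      ⟪a • l i + b • l j, Q (a • l i + b • l j)⟫_ℝ = a ^ 2 + b ^ 2 := by
    intro i j hij a b
    rw [hquad]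
    have hs : SQ (a • l i + b • l j) = a • f i + b • f j := by
      rw [map_add, SQ.map_smul, SQ.map_smul, hl, hl]
    rw [hs]
    have h1 := hfij i i
    have h2 := hfij i j
    have h3 := hfij j i
    have h4 := hfij j j
    rw [if_pos rfl] at h1 h4
    rw [if_neg hij] at h2
    rw [if_neg (Ne.symm hij)] at h3
    simp only [inner_add_left, inner_add_right, real_inner_smul_left, real_inner_smul_right,
      h1, h2, h3, h4]
    ring
  -- variances of the chosen functionals
  have hv1 : ∀ i : ℕ, ⟪l i, Q (l i)⟫_ℝ = 1 := by
    intro i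
    have h := hkey i (i+1) (by omega) 1 0
    simpa using h
  have hv2sum : ∀ i j, i ≠ j → ⟪l i + l j, Q (l i + l j)⟫_ℝ = 2 := by
    intro i j hij
    have h := hkey i j hij 1 1
    simp only [one_smul] at h
    rw [h]; norm_num
  have hv2sub : ∀ i j, i ≠ j → ⟪l i - l j, Q (l i - l j)⟫_ℝ = 2 := by
    intro i j hij
    have h := hkey i j hij 1 (-1)
    simp only [one_smul, neg_one_smul, ← sub_eq_add_neg] at h
    rw [h]; norm_num
  -- moments of the coordinates
  have hmom := fun u : H => CMaux.moments μ Q hG u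
  have hIs2 : ∀ i : ℕ, Integrable (fun x => ⟪l i, x⟫_ℝ ^ 2) μ := fun i => (hmom (l i)).1
  have hIs4 : ∀ u : H, Integrable (fun x => ⟪u, x⟫_ℝ ^ 4) μ := fun u => (hmom u).2.1
  have hEs2 : ∀ i : ℕ, ∫ x, ⟪l i, x⟫_ℝ ^ 2 ∂μ = 1 := by
    intro i
    have h := (hmom (l i)).2.2.1
    rw [hv1 i] at h
    simpa using h
  have hEs4 : ∀ i : ℕ, ∫ x, ⟪l i, x⟫_ℝ ^ 4 ∂μ = 3 := by
    intro i
    have h := (hmom (l i)).2.2.2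
    rw [hv1 i] at h
    simpa using h
  have hco : ((Real.toNNReal 2 : ℝ≥0) : ℝ) = 2 := Real.coe_toNNReal _ (by norm_num)
  have hEs4sum : ∀ i j, i ≠ j → ∫ x, ⟪l i + l j, x⟫_ℝ ^ 4 ∂μ = 12 := by
    intro i j hij
    have h := (hmom (l i + l j)).2.2.2
    rw [hv2sum i j hij] at h
    rw [h, hco]; norm_num
  have hEs4sub : ∀ i j, i ≠ j → ∫ x, ⟪l i - l j, x⟫_ℝ ^ 4 ∂μ = 12 := by
    intro i j hij
    have h := (hmom (l i - l j)).2.2.2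
    rw [hv2sub i j hij] at h
    rw [h, hco]; norm_num
  -- cross moments
  have hcross : ∀ i j, i ≠ j → Integrable (fun x => ⟪l i, x⟫_ℝ ^ 2 * ⟪l j, x⟫_ℝ ^ 2) μ ∧
      ∫ x, ⟪l i, x⟫_ℝ ^ 2 * ⟪l j, x⟫_ℝ ^ 2 ∂μ = 1 := by
    intro i j hij
    have hgint : Integrable (fun x => (⟪l i + l j, x⟫_ℝ ^ 4 + ⟪l i - l j, x⟫_ℝ ^ 4
        - 2 * ⟪l i, x⟫_ℝ ^ 4 - 2 * ⟪l j, x⟫_ℝ ^ 4) / 12) μ :=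
      ((((hIs4 _).add (hIs4 _)).sub ((hIs4 (l i)).const_mul 2)).sub
        ((hIs4 (l j)).const_mul 2)).div_const 12
    have hpt : (fun x => ⟪l i, x⟫_ℝ ^ 2 * ⟪l j, x⟫_ℝ ^ 2)
        = fun x => (⟪l i + l j, x⟫_ℝ ^ 4 + ⟪l i - l j, x⟫_ℝ ^ 4
          - 2 * ⟪l i, x⟫_ℝ ^ 4 - 2 * ⟪l j, x⟫_ℝ ^ 4) / 12 := by
      funext x
      rw [inner_add_left, inner_sub_left]
      ring
    have hA : Integrable (fun x => ⟪l i + l j, x⟫_ℝ ^ 4 + ⟪l i - l j, x⟫_ℝ ^ 4) μ :=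
      (hIs4 _).add (hIs4 _)
    have hB : Integrable (fun x => 2 * ⟪l i, x⟫_ℝ ^ 4) μ := (hIs4 (l i)).const_mul 2
    have hC : Integrable (fun x => ⟪l i + l j, x⟫_ℝ ^ 4 + ⟪l i - l j, x⟫_ℝ ^ 4
        - 2 * ⟪l i, x⟫_ℝ ^ 4) μ := hA.sub hB
    have hD : Integrable (fun x => 2 * ⟪l j, x⟫_ℝ ^ 4) μ := (hIs4 (l j)).const_mul 2
    refine ⟨by rw [hpt]; exact hgint, ?_⟩
    rw [hpt]
    rw [integral_div, integral_sub hC hD, integral_sub hA hB, integral_add (hIs4 _) (hIs4 _),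
      integral_const_mul, integral_const_mul, hEs4sum i j hij, hEs4sub i j hij, hEs4 i, hEs4 j]
    norm_num
  have hcij : ∀ i j : ℕ, ∫ x, ⟪l i, x⟫_ℝ ^ 2 * ⟪l j, x⟫_ℝ ^ 2 ∂μ
      = if i = j then 3 else 1 := by
    intro i j
    by_cases h : i = j
    · subst h
      rw [if_pos rfl]
      have hpt : (fun x => ⟪l i, x⟫_ℝ ^ 2 * ⟪l i, x⟫_ℝ ^ 2) = fun x => ⟪l i, x⟫_ℝ ^ 4 :=
        funext fun x => by ring
      rw [hpt, hEs4 i]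
    · rw [if_neg h]
      exact (hcross i j h).2
  have hIcij : ∀ i j : ℕ, Integrable (fun x => ⟪l i, x⟫_ℝ ^ 2 * ⟪l j, x⟫_ℝ ^ 2) μ := by
    intro i j
    by_cases h : i = j
    · subst h
      have hpt : (fun x => ⟪l i, x⟫_ℝ ^ 2 * ⟪l i, x⟫_ℝ ^ 2) = fun x => ⟪l i, x⟫_ℝ ^ 4 :=
        funext fun x => by ring
      rw [hpt]; exact hIs4 (l i)
    · exact (hcross i j h).1
  -- the partial sums
  set T : ℕ → H → ℝ := fun k x => ∑ i ∈ Finset.range k, ⟪l i, x⟫_ℝ ^ 2 with hTdef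
  have hTint : ∀ k, Integrable (T k) μ := fun k => integrable_finset_sum _ (fun i _ => hIs2 i)
  have hTE : ∀ k, ∫ x, T k x ∂μ = k := by
    intro k
    rw [hTdef]
    rw [integral_finset_sum _ (fun i _ => hIs2 i)]
    simp [hEs2]
  have hT2int : ∀ k, Integrable (fun x => (T k x) ^ 2) μ := by
    intro k
    have hpt : (fun x => (T k x) ^ 2) = fun x => ∑ i ∈ Finset.range k, ∑ j ∈ Finset.range k,
        ⟪l i, x⟫_ℝ ^ 2 * ⟪l j, x⟫_ℝ ^ 2 := by
      funext x
      rw [hTdef, sq, Finset.sum_mul_sum]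
    rw [hpt]
    exact integrable_finset_sum _ fun i _ => integrable_finset_sum _ fun j _ => hIcij i j
  have hT2E : ∀ k : ℕ, ∫ x, (T k x) ^ 2 ∂μ = k ^ 2 + 2 * k := by
    intro k
    have hpt : (fun x => (T k x) ^ 2) = fun x => ∑ i ∈ Finset.range k, ∑ j ∈ Finset.range k,
        ⟪l i, x⟫_ℝ ^ 2 * ⟪l j, x⟫_ℝ ^ 2 := by
      funext x
      rw [hTdef, sq, Finset.sum_mul_sum]
    rw [hpt, integral_finset_sum _ (fun i _ => integrable_finset_sum _ fun j _ => hIcij i j)]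
    have hrow : ∀ i ∈ Finset.range k,
        ∫ x, (∑ j ∈ Finset.range k, ⟪l i, x⟫_ℝ ^ 2 * ⟪l j, x⟫_ℝ ^ 2) ∂μ = (k : ℝ) + 2 := by
      intro i hi
      rw [integral_finset_sum _ (fun j _ => hIcij i j)]
      have : ∀ j ∈ Finset.range k, ∫ x, ⟪l i, x⟫_ℝ ^ 2 * ⟪l j, x⟫_ℝ ^ 2 ∂μ
          = 1 + if i = j then (2:ℝ) else 0 := by
        intro j _
        rw [hcij i j]
        by_cases h : i = j <;> simp [h] <;> norm_num
      rw [Finset.sum_congr rfl this, Finset.sum_add_distrib, Finset.sum_const,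
        Finset.sum_ite_eq, if_pos hi]
      simp
    rw [Finset.sum_congr rfl hrow, Finset.sum_const]
    simp only [Finset.card_range, nsmul_eq_mul]
    ring
  have hVar : ∀ k : ℕ, ∫ x, (T k x - k) ^ 2 ∂μ = 2 * k := by
    intro k
    have hexp : (fun x => (T k x - (k:ℝ)) ^ 2)
        = fun x => (T k x ^ 2 - (2 * (k:ℝ)) * T k x) + (k:ℝ) ^ 2 := funext fun x => by ring
    have hI1 : Integrable (fun x => (2 * (k:ℝ)) * T k x) μ := (hTint k).const_mul _
    have hI2 : Integrable (fun x => T k x ^ 2 - (2 * (k:ℝ)) * T k x) μ := (hT2int k).sub hI1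
    rw [hexp, integral_add hI2 (integrable_const _), integral_sub (hT2int k) hI1,
      integral_const_mul, hT2E k, hTE k, integral_const, probReal_univ]
    simp
    ring
  have hcheb : ∀ n k : ℕ, n < k →
      (μ {x | T k x ≤ (n:ℝ)}).toReal * ((k:ℝ) - n) ^ 2 ≤ 2 * k := by
    intro n k hnk
    have hTcont : Continuous (T k) := by
      rw [hTdef]
      exact continuous_finset_sum _ fun i _ =>
        (Continuous.inner continuous_const continuous_id).pow 2
    have hmeasC : MeasurableSet {x | T k x ≤ (n:ℝ)} := by
      have h : {x | T k x ≤ (n:ℝ)} = T k ⁻¹' (Set.Iic (n:ℝ)) := rfl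
      rw [h]; exact hTcont.measurable measurableSet_Iic
    have hIU : Integrable (fun x => (T k x - k) ^ 2) μ := by
      have hexp : (fun x => (T k x - (k:ℝ)) ^ 2)
          = fun x => (T k x ^ 2 - (2 * (k:ℝ)) * T k x) + (k:ℝ) ^ 2 := funext fun x => by ring
      rw [hexp]; exact ((hT2int k).sub ((hTint k).const_mul _)).add (integrable_const _)
    have h1 : ∫ x in {x | T k x ≤ (n:ℝ)}, ((k:ℝ) - n) ^ 2 ∂μ
        ≤ ∫ x in {x | T k x ≤ (n:ℝ)}, (T k x - k) ^ 2 ∂μ := by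
      refine setIntegral_mono_on (integrableOn_const (measure_ne_top μ _))
        hIU.integrableOn hmeasC ?_
      intro x hx
      have hx' : T k x ≤ (n:ℝ) := hx
      have hnk' : (n:ℝ) < k := by exact_mod_cast hnk
      nlinarith
    have h2 : ∫ x in {x | T k x ≤ (n:ℝ)}, (T k x - k) ^ 2 ∂μ ≤ ∫ x, (T k x - k) ^ 2 ∂μ :=
      setIntegral_le_integral hIU (ae_of_all _ fun x => sq_nonneg _)
    have h3 := le_trans h1 h2
    rw [hVar k, setIntegral_const] at h3
    simpa [smul_eq_mul, measureReal_def] using h3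
  have hD : ∀ n : ℕ, μ (⋂ k : ℕ, {x | T k x ≤ (n:ℝ)}) = 0 := by
    intro n
    set D := ⋂ k : ℕ, {x | T k x ≤ (n:ℝ)} with hDdef
    have hmono : ∀ k : ℕ, μ D ≤ μ {x | T k x ≤ (n:ℝ)} := fun k =>
      measure_mono (Set.iInter_subset _ k)
    have hne : μ D ≠ ⊤ := measure_ne_top μ D
    have ht0 : 0 ≤ (μ D).toReal := ENNReal.toReal_nonneg
    have hbound : ∀ᶠ k : ℕ in atTop, (μ D).toReal ≤ 8 / (k : ℝ) := by
      filter_upwards [Filter.eventually_ge_atTop (2 * n + 2)] with k hk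
      have hnk : n < k := by omega
      have h1 := hcheb n k hnk
      have h2 : (μ D).toReal ≤ (μ {x | T k x ≤ (n:ℝ)}).toReal :=
        ENNReal.toReal_mono (measure_ne_top μ _) (hmono k)
      have hk' : (2 * (n:ℝ) + 2) ≤ (k:ℝ) := by exact_mod_cast hk
      have hn0 : (0:ℝ) ≤ n := Nat.cast_nonneg n
      have hkpos : (0:ℝ) < k := by linarith
      rw [le_div_iff₀ hkpos]
      have h3 : (μ D).toReal * ((k:ℝ) - n) ^ 2 ≤ 2 * k :=
        le_trans (mul_le_mul_of_nonneg_right h2 (sq_nonneg _)) h1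
      have h4 : (k:ℝ) ^ 2 ≤ 4 * ((k:ℝ) - n) ^ 2 := by nlinarith
      have h5 : (μ D).toReal * (k:ℝ) ^ 2 ≤ 8 * k := by nlinarith
      nlinarith
    have hlim : Tendsto (fun k : ℕ => 8 / (k:ℝ)) atTop (𝓝 0) :=
      tendsto_const_div_atTop_nhds_zero_nat 8
    have h0 : (μ D).toReal ≤ 0 := ge_of_tendsto hlim hbound
    have h00 := le_antisymm h0 ht0
    rwa [ENNReal.toReal_eq_zero_iff, or_iff_left hne] at h00
  have hsub : Set.range SQ ⊆ ⋃ n : ℕ, ⋂ k : ℕ, {x | T k x ≤ (n:ℝ)} := by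
    rintro _ ⟨y, rfl⟩
    refine Set.mem_iUnion.mpr ⟨⌈‖y‖ ^ 2⌉₊, Set.mem_iInter.mpr fun k => ?_⟩
    show T k (SQ y) ≤ _
    have hTx : T k (SQ y) = ∑ i ∈ Finset.range k, ⟪f i, y⟫_ℝ ^ 2 := by
      rw [hTdef]
      refine Finset.sum_congr rfl fun i _ => ?_
      rw [← hl i, ← hSQapp]
    have hbes : ∑ i ∈ Finset.range k, ‖⟪f i, y⟫_ℝ‖ ^ 2 ≤ ‖y‖ ^ 2 :=
      Orthonormal.sum_inner_products_le y hon
    have hb2 : ∑ i ∈ Finset.range k, ⟪f i, y⟫_ℝ ^ 2 ≤ ‖y‖ ^ 2 := by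
      refine le_trans (le_of_eq ?_) hbes
      refine Finset.sum_congr rfl fun i _ => ?_
      rw [Real.norm_eq_abs, sq_abs]
    rw [hTx]
    exact le_trans hb2 (Nat.le_ceil _)
  have hzero : μ (⋃ n : ℕ, ⋂ k : ℕ, {x | T k x ≤ (n:ℝ)}) = 0 := by
    refine le_antisymm ?_ zero_le
    refine le_trans (measure_iUnion_le _) ?_
    simp [hD]
  exact le_antisymm (le_trans (measure_mono hsub) hzero.le) zero_le
end

section
/- Let (p_i) and (r_i) be sequences of positive reals with ∑ p_i < ∞ and inf_i r_i = 0. Then there exists y = (y_i) ∈ ℓ² with ∑ y_i² ≤ 1 such that ∑_{i=1}^∞ y_i²/(r_i + p_i) = ∞ or ∑_{i=1}^∞ log(1 + p_i/r_i) = ∞. -/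
theorem stmt11 (p r : ℕ → ℝ)
    (hp : ∀ i, 0 < p i) (hrpos : ∀ i, 0 < r i)
    (hps : Summable p) (hinf : ⨅ i, r i = 0) :
    ∃ y : ℕ → ℝ, Summable (fun i => y i ^ 2) ∧ ∑' i, y i ^ 2 ≤ 1 ∧
      (¬ Summable (fun i => y i ^ 2 / (r i + p i)) ∨
        ¬ Summable (fun i => Real.log (1 + p i / r i))) := by
  classical
  by_cases hlog : Summable (fun i => Real.log (1 + p i / r i))
  swap
  · exact ⟨fun _ => 0, by simpa using summable_zero, by simp, Or.inr hlog⟩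
  -- construct a strictly monotone f with r (f k) < (1/2)^(k+1)
  have key : ∀ n k : ℕ, ∃ i : ℕ, n < i ∧ r i < (1/2 : ℝ)^(k+1) := by
    intro n k
    set ε : ℝ := min ((1/2 : ℝ)^(k+1))
      (Finset.inf' (Finset.range (n+1)) ⟨0, by simp⟩ r) with hε
    have hεpos : 0 < ε := by
      apply lt_min (by positivity)
      refine (Finset.lt_inf'_iff _).2 ?_
      intro b _
      exact hrpos b
    obtain ⟨j, hj⟩ := exists_lt_of_ciInf_lt (f := r) (by rw [hinf]; exact hεpos)
    refine ⟨j, ?_, lt_of_lt_of_le hj (min_le_left _ _)⟩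
    by_contra h
    push_neg at h
    have : ε ≤ r j := le_trans (min_le_right _ _)
      (Finset.inf'_le _ (by simp; omega))
    linarith
  choose g hg1 hg2 using key
  set f : ℕ → ℕ := fun k => Nat.rec (g 0 0) (fun k ih => g ih (k+1)) k with hf
  have hfs : ∀ k, f (k+1) = g (f k) (k+1) := fun k => rfl
  have hmono : StrictMono f := by
    apply strictMono_nat_of_lt_succ
    intro k
    rw [hfs]
    exact hg1 (f k) (k+1)
  have hfr : ∀ k, r (f k) < (1/2 : ℝ)^(k+1) := by
    intro k
    cases k with
    | zero => exact hg2 0 0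
    | succ k => rw [hfs]; exact hg2 (f k) (k+1)
  have hinj : Function.Injective f := hmono.injective
  set y : ℕ → ℝ := fun i => if i ∈ Set.range f then Real.sqrt (r i) else 0 with hy
  have hzero : ∀ i ∉ Set.range f, y i ^ 2 = 0 := by
    intro i hi
    show (if i ∈ Set.range f then Real.sqrt (r i) else 0) ^ 2 = 0
    rw [if_neg hi]
    simp
  have hcomp : (fun i => y i ^ 2) ∘ f = fun k => r (f k) := by
    funext k
    simp only [Function.comp_apply, hy]
    rw [if_pos ⟨k, rfl⟩, Real.sq_sqrt (hrpos _).le]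
  have hsum_geo : Summable (fun k : ℕ => (1/2 : ℝ)^(k+1)) := by
    simp_rw [pow_succ']
    exact (summable_geometric_of_lt_one (by norm_num) (by norm_num)).mul_left _
  have hsum_comp : Summable ((fun i => y i ^ 2) ∘ f) := by
    rw [hcomp]
    exact hsum_geo.of_nonneg_of_le (fun k => (hrpos _).le) (fun k => (hfr k).le)
  have hsumy : Summable (fun i => y i ^ 2) :=
    (hinj.summable_iff hzero).mp hsum_comp
  refine ⟨y, hsumy, ?_, Or.inl ?_⟩
  · have hsupp : Function.support (fun i => y i ^ 2) ⊆ Set.range f := by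
      intro i hi
      by_contra h
      exact hi (hzero i h)
    have h1 : ∑' i, y i ^ 2 = ∑' k, r (f k) := by
      rw [← hinj.tsum_eq hsupp]
      exact congrArg tsum hcomp
    rw [h1]
    have h2 : ∑' k : ℕ, (1/2 : ℝ)^(k+1) = 1 := by
      simp_rw [pow_succ']
      rw [tsum_mul_left, tsum_geometric_of_lt_one (by norm_num) (by norm_num)]
      norm_num
    calc ∑' k, r (f k) ≤ ∑' k : ℕ, (1/2 : ℝ)^(k+1) :=
          Summable.tsum_le_tsum (fun k => (hfr k).le) (hcomp ▸ hsum_comp) hsum_geo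
      _ = 1 := h2
  · intro hs
    -- p i / r i → 0
    have hl0 : Filter.Tendsto (fun i => Real.log (1 + p i / r i))
        Filter.atTop (nhds 0) := hlog.tendsto_atTop_zero
    have hexp : Filter.Tendsto (fun i => 1 + p i / r i) Filter.atTop (nhds 1) := by
      have := (Real.continuous_exp.tendsto 0).comp hl0
      simp only [Real.exp_zero] at this
      convert this using 1
      funext i
      simp only [Function.comp_apply]
      rw [Real.exp_log (by have := hp i; have := hrpos i; positivity)]
    have hexpf : Filter.Tendsto (fun k => 1 + p (f k) / r (f k))
        Filter.atTop (nhds 1) := hexp.comp hmono.tendsto_atTop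
    have hinv : Filter.Tendsto (fun k => (1 + p (f k) / r (f k))⁻¹)
        Filter.atTop (nhds 1) := by
      have := hexpf.inv₀ one_ne_zero
      simpa using this
    have hterm : (fun k => y (f k) ^ 2 / (r (f k) + p (f k)))
        = fun k => (1 + p (f k) / r (f k))⁻¹ := by
      funext k
      have h1 : y (f k) ^ 2 = r (f k) := congrFun hcomp k
      rw [h1]
      have hr := hrpos (f k)
      have hp' := hp (f k)
      field_simp
    have h0 : Filter.Tendsto (fun k => y (f k) ^ 2 / (r (f k) + p (f k)))
        Filter.atTop (nhds 0) := hs.tendsto_atTop_zero.comp hmono.tendsto_atTop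
    rw [hterm] at h0
    have : (0 : ℝ) = 1 := tendsto_nhds_unique h0 hinv
    norm_num at this
end

section
/- Let H be an infinite-dimensional separable Hilbert space, μ^f = N(m^f, P^f) a Gaussian probability measure with trace-class covariance P^f, and R a bounded symmetric positive semidefinite operator that commutes with P^f. Define the data likelihood d(y|x) = exp(-½|y - x|²_{R⁻¹}) with the convention |z|²_{R⁻¹} = ∞ for z outside the range of R^{1/2}. Then ∫_H d(y|x) dμ^f(x) > 0 for all y ∈ H if and only if R has positive lower bound. -/
open MeasureTheory ProbabilityTheory ENNReal
open scoped InnerProductSpace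

variable {H : Type*} [NormedAddCommGroup H] [InnerProductSpace ℝ H] [CompleteSpace H]
  [MeasurableSpace H] [BorelSpace H]

/-- Extended quadratic form `|x|²_{A⁻¹}` associated to the square root `S = A^{1/2}`. -/
noncomputable def qform (S : H →L[ℝ] H) (x : H) : ℝ≥0∞ :=
  ⨅ u ∈ {u : H | S u = x}, ENNReal.ofReal (‖u‖ ^ 2)

/-- `exp(-t)` for `t ∈ [0,∞]`, with the convention `exp(-∞) = 0`. -/
noncomputable def expNeg (t : ℝ≥0∞) : ℝ :=
  if t = ⊤ then 0 else Real.exp (-t.toReal)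

lemma qform_eq_top {S : H →L[ℝ] H} {z : H} (h : ∀ u, S u ≠ z) : qform S z = ⊤ := by
  refine le_antisymm le_top (le_iInf fun u => le_iInf fun hu => absurd hu (h u))

lemma qform_le {S : H →L[ℝ] H} {z u : H} (h : S u = z) :
    qform S z ≤ ENNReal.ofReal (‖u‖ ^ 2) := by
  unfold qform; exact iInf₂_le u (show u ∈ {u : H | S u = z} from h)

lemma le_qform {S : H →L[ℝ] H} {z : H} {a : ℝ≥0∞}
    (h : ∀ u, S u = z → a ≤ ENNReal.ofReal (‖u‖ ^ 2)) : a ≤ qform S z := by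
  unfold qform; exact le_iInf₂ fun u hu => h u hu

lemma qform_apply_ne_top {S : H →L[ℝ] H} (u : H) : qform S (S u) ≠ ⊤ :=
  ne_top_of_le_ne_top ENNReal.ofReal_ne_top (qform_le rfl)

lemma expNeg_pos {t : ℝ≥0∞} (h : t ≠ ⊤) : 0 < expNeg t := by
  simp [expNeg, h, Real.exp_pos]

lemma expNeg_top : expNeg ⊤ = 0 := by simp [expNeg]

theorem stmt13 [TopologicalSpace.SeparableSpace H] (hinf : ¬ FiniteDimensional ℝ H)
    (μf : Measure H) [IsProbabilityMeasure μf]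
    (mf : H) (Pf R SR : H →L[ℝ] H)
    (hPfsa : IsSelfAdjoint Pf) (hPfpos : ∀ u, 0 ≤ ⟪Pf u, u⟫_ℝ) (hPftr : HasFiniteTrace Pf)
    (hG : IsGaussianMeasure μf mf Pf)
    (hRsa : IsSelfAdjoint R) (hRpos : ∀ u, 0 ≤ ⟪R u, u⟫_ℝ)
    (hSRsa : IsSelfAdjoint SR) (hSRpos : ∀ u, 0 ≤ ⟪SR u, u⟫_ℝ) (hSR : SR ∘L SR = R)
    (hcomm : Pf ∘L R = R ∘L Pf) :
    (∀ y : H, 0 < ∫ x, expNeg (qform SR (y - x) / 2) ∂μf) ↔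
      ∃ α > 0, ∀ u : H, α * ‖u‖ ^ 2 ≤ ⟪R u, u⟫_ℝ := by
  have hsym : ∀ x y : H, ⟪SR x, y⟫_ℝ = ⟪x, SR y⟫_ℝ :=
    ContinuousLinearMap.isSelfAdjoint_iff_isSymmetric.mp hSRsa
  have hRnorm : ∀ u : H, ⟪R u, u⟫_ℝ = ‖SR u‖ ^ 2 := by
    intro u
    have h1 : R u = SR (SR u) := by rw [← hSR]; rfl
    rw [h1, hsym (SR u) u, real_inner_self_eq_norm_sq]
  constructor
  · -- forward direction
    intro h
    have hsurj : Function.Surjective SR := by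
      by_contra hns
      rw [Function.Surjective] at hns
      push_neg at hns
      obtain ⟨y₀, hy₀⟩ := hns
      set As : ℝ → Set H := fun t => {x | ∃ u, SR u = t • y₀ - x} with hAs
      have hdisj : Pairwise (Function.onFun (MeasureTheory.AEDisjoint μf) As) := by
        intro t s hts
        apply Disjoint.aedisjoint
        rw [Set.disjoint_left]
        rintro x ⟨u, hu⟩ ⟨v, hv⟩
        apply hy₀ ((t - s)⁻¹ • (u - v))
        have h2 : SR (u - v) = (t - s) • y₀ := by
          rw [map_sub, hu, hv, sub_smul]; abel
        rw [SR.map_smul, h2, smul_smul, inv_mul_cancel₀ (sub_ne_zero.mpr hts), one_smul]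
      have hmem : ∀ (t : ℝ) (x : H),
          x ∈ As t ↔ expNeg (qform SR (t • y₀ - x) / 2) ≠ 0 := by
        intro t x
        constructor
        · rintro ⟨u, hu⟩
          have hq : qform SR (t • y₀ - x) ≠ ⊤ := hu ▸ qform_apply_ne_top u
          have : qform SR (t • y₀ - x) / 2 ≠ ⊤ :=
            (ENNReal.div_lt_top hq (by norm_num)).ne
          exact (expNeg_pos this).ne'
        · intro hne
          by_contra hnu
          have : ∀ u, SR u ≠ t • y₀ - x := by
            intro u hu; exact hnu ⟨u, hu⟩
          rw [qform_eq_top this, ENNReal.top_div_of_ne_top (by norm_num), expNeg_top] at hne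
          exact hne rfl
      have key : ∀ t : ℝ, NullMeasurableSet (As t) μf ∧ 0 < μf (As t) := by
        intro t
        have hi := h (t • y₀)
        set f : H → ℝ := fun x => expNeg (qform SR (t • y₀ - x) / 2) with hf
        have hint : Integrable f μf := by
          by_contra hni
          rw [integral_undef hni] at hi
          exact lt_irrefl 0 hi
        have hAeq : As t = f ⁻¹' ({0}ᶜ) := Set.ext fun x => (hmem t x).trans Iff.rfl
        constructor
        · rw [hAeq]
          exact hint.aemeasurable.nullMeasurable (measurableSet_singleton (0:ℝ)).compl
        · rcases (zero_le : 0 ≤ μf (As t)).lt_or_eq with hlt | heq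
          · exact hlt
          · exfalso
            have hz : μf {x | ¬ f x = 0} = 0 := by
              have : {x | ¬ f x = 0} = As t := by
                ext x; simp only [Set.mem_setOf_eq, hmem t x]; exact Iff.rfl
              rw [this, ← heq]
            have hae : f =ᵐ[μf] 0 := by
              rw [Filter.EventuallyEq, ae_iff]
              simpa using hz
            have hz2 : ∫ x, f x ∂μf = 0 := by
              rw [integral_congr_ae hae]; simp
            rw [hz2] at hi
            exact lt_irrefl 0 hi
      have hcnt : {t : ℝ | 0 < μf (As t)}.Countable :=
        MeasureTheory.Measure.countable_meas_pos_of_disjoint_iUnion₀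
          (fun t => (key t).1) hdisj
      have hsub : (Set.univ : Set ℝ) ⊆ {t : ℝ | 0 < μf (As t)} :=
        fun t _ => (key t).2
      exact Cardinal.not_countable_real (Set.Countable.mono hsub hcnt)
    have hinj : Function.Injective SR := by
      have hker : ∀ w, SR w = 0 → w = 0 := by
        intro w hw
        have hz : ⟪w, w⟫_ℝ = 0 := by
          obtain ⟨u, hu⟩ := hsurj w
          calc ⟪w, w⟫_ℝ = ⟪w, SR u⟫_ℝ := by rw [hu]
            _ = ⟪SR w, u⟫_ℝ := (hsym w u).symm
            _ = 0 := by rw [hw, inner_zero_left]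
        exact inner_self_eq_zero.mp hz
      intro a b hab
      have := hker (a - b) (by rw [map_sub, hab, sub_self])
      exact sub_eq_zero.mp this
    set e := ContinuousLinearEquiv.ofBijective SR (LinearMap.ker_eq_bot.mpr hinj)
      (LinearMap.range_eq_top.mpr hsurj) with he
    set C := ‖(e.symm : H →L[ℝ] H)‖ with hC
    have hC0 : 0 ≤ C := norm_nonneg _
    refine ⟨((C + 1) ^ 2)⁻¹, by positivity, fun u => ?_⟩
    have h1 : ‖u‖ ≤ (C + 1) * ‖SR u‖ := by
      have h2 : e.symm (SR u) = u := ContinuousLinearEquiv.ofBijective_symm_apply_apply _ _ _ u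
      calc ‖u‖ = ‖e.symm (SR u)‖ := by rw [h2]
        _ ≤ C * ‖SR u‖ := (e.symm : H →L[ℝ] H).le_opNorm (SR u)
        _ ≤ (C + 1) * ‖SR u‖ := by nlinarith [norm_nonneg (SR u)]
    rw [hRnorm u, inv_mul_le_iff₀ (by positivity)]
    nlinarith [norm_nonneg u, norm_nonneg (SR u)]
  · -- backward direction
    rintro ⟨α, hα, hR⟩ y
    have hsq : (0:ℝ) < Real.sqrt α := Real.sqrt_pos.mpr hα
    have hlow : ∀ u : H, Real.sqrt α * ‖u‖ ≤ ‖SR u‖ := by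
      intro u
      have h1 : α * ‖u‖ ^ 2 ≤ ‖SR u‖ ^ 2 := (hRnorm u) ▸ hR u
      have h2 := Real.sqrt_le_sqrt h1
      rwa [Real.sqrt_mul hα.le, Real.sqrt_sq (norm_nonneg _), Real.sqrt_sq (norm_nonneg _)]
        at h2
    have anti : AntilipschitzWith ⟨(Real.sqrt α)⁻¹, by positivity⟩ SR := by
      apply SR.antilipschitz_of_bound
      intro x
      show ‖x‖ ≤ (Real.sqrt α)⁻¹ * ‖SR x‖
      rw [inv_mul_eq_div, le_div_iff₀ hsq, mul_comm]
      exact hlow x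
    have hker : LinearMap.ker (SR : H →ₗ[ℝ] H) = ⊥ := (LinearMap.ker_eq_bot (f := (SR : H →ₗ[ℝ] H))).mpr anti.injective
    haveI : CompleteSpace (LinearMap.range (SR : H →ₗ[ℝ] H)) := anti.completeSpace_range_clm
    have hrange : LinearMap.range (SR : H →ₗ[ℝ] H) = ⊤ := by
      rw [← Submodule.orthogonal_eq_bot_iff, Submodule.eq_bot_iff]
      intro v hv
      have h0 : ⟪R v, v⟫_ℝ = 0 := by
        have hmem : SR (SR v) ∈ LinearMap.range (SR : H →ₗ[ℝ] H) := ⟨SR v, rfl⟩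
        have := (Submodule.mem_orthogonal _ v).mp hv _ hmem
        have hRv : R v = SR (SR v) := by rw [← hSR]; rfl
        rw [hRv, ← this, real_inner_comm]
      have h1 := hR v
      rw [h0] at h1
      have h2 : ‖v‖ ^ 2 ≤ 0 := by
        by_contra h3
        push_neg at h3
        nlinarith [mul_pos hα h3]
      have h4 : ‖v‖ = 0 := by
        have := le_antisymm h2 (sq_nonneg ‖v‖)
        exact pow_eq_zero_iff two_ne_zero |>.mp this
      exact norm_eq_zero.mp h4
    set e := ContinuousLinearEquiv.ofBijective SR hker hrange with he
    have hq : ∀ z : H, qform SR z = ENNReal.ofReal (‖e.symm z‖ ^ 2) := by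
      intro z
      have hez : SR (e.symm z) = z := ContinuousLinearEquiv.ofBijective_apply_symm_apply _ _ _ z
      apply le_antisymm
      · exact qform_le hez
      · refine le_qform fun u hu => ?_
        have : u = e.symm z := anti.injective (by rw [hez]; exact hu)
        rw [this]
    have hpt : ∀ x : H,
        expNeg (qform SR (y - x) / 2) = Real.exp (-(‖e.symm (y - x)‖ ^ 2 / 2)) := by
      intro x
      rw [hq]
      have h2 : ENNReal.ofReal (‖e.symm (y - x)‖ ^ 2) / 2
          = ENNReal.ofReal (‖e.symm (y - x)‖ ^ 2 / 2) := by
        rw [ENNReal.ofReal_div_of_pos two_pos, ENNReal.ofReal_ofNat]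
      rw [h2, expNeg, if_neg ENNReal.ofReal_ne_top, ENNReal.toReal_ofReal (by positivity)]
    set g : H → ℝ := fun x => Real.exp (-(‖e.symm (y - x)‖ ^ 2 / 2)) with hg
    have hgc : Continuous g := by
      apply Real.continuous_exp.comp
      apply Continuous.neg
      apply Continuous.div_const
      exact ((e.symm.continuous.comp (continuous_const.sub continuous_id)).norm.pow 2)
    have hgi : Integrable g μf := by
      refine Integrable.mono' (integrable_const (1:ℝ)) hgc.aestronglyMeasurable ?_
      filter_upwards with x
      rw [Real.norm_eq_abs, abs_of_pos (Real.exp_pos _)]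
      exact Real.exp_le_one_iff.mpr (neg_nonpos.mpr (by positivity))
    have heq : ∫ x, expNeg (qform SR (y - x) / 2) ∂μf = ∫ x, g x ∂μf :=
      integral_congr_ae (Filter.Eventually.of_forall fun x => hpt x)
    rw [heq, integral_pos_iff_support_of_nonneg (fun x => (Real.exp_pos _).le) hgi]
    have hsupp : Function.support g = Set.univ :=
      Set.eq_univ_of_forall fun x => (Real.exp_pos _).ne'
    rw [hsupp, measure_univ]
    exact zero_lt_one
end

section
/- Let H be a separable Hilbert space with orthonormal basis (e_i), μ^f = N(m^f, P^f) Gaussian with P^f e_i = p_i e_i (p_i > 0, ∑ p_i < ∞), and R a commuting bounded symmetric positive semidefinite operator with R e_i = r_i e_i, r_i > 0. If inf_i r_i = 0, then the set A = { y ∈ H : ∫_H exp(-½|y - x|²_{R⁻¹}) dμ^f(x) = 0 } is dense in H. -/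
open MeasureTheory ProbabilityTheory ENNReal
open scoped InnerProductSpace

variable {H : Type*} [NormedAddCommGroup H] [InnerProductSpace ℝ H] [CompleteSpace H]
  [MeasurableSpace H] [BorelSpace H]

/-- Diagonal extended quadratic form `|z|²_{R⁻¹} = ∑ ⟪z,eᵢ⟫²/rᵢ ∈ [0,∞]`. -/
noncomputable def qformDiag (e : HilbertBasis ℕ ℝ H) (r : ℕ → ℝ) (z : H) : ℝ≥0∞ :=
  ∑' i, ENNReal.ofReal (⟪z, e i⟫_ℝ ^ 2 / r i)

lemma expNeg_nonneg (t : ℝ≥0∞) : 0 ≤ expNeg t := by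
  unfold expNeg; split
  · exact le_rfl
  · positivity

lemma expNeg_le_one (t : ℝ≥0∞) : expNeg t ≤ 1 := by
  unfold expNeg; split
  · norm_num
  · exact Real.exp_le_one_iff.mpr (by simp)

lemma expNeg_anti {s t : ℝ≥0∞} (h : s ≤ t) : expNeg t ≤ expNeg s := by
  unfold expNeg
  split
  · split
    · exact le_rfl
    · positivity
  · rename_i ht
    have hs : s ≠ ⊤ := fun hs => ht (top_le_iff.mp (hs ▸ h))
    rw [if_neg hs]
    exact Real.exp_le_exp.mpr (neg_le_neg (ENNReal.toReal_mono ht h))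

lemma expNeg_ofReal {a : ℝ} (ha : 0 ≤ a) : expNeg (ENNReal.ofReal a) = Real.exp (-a) := by
  rw [expNeg, if_neg ENNReal.ofReal_ne_top, ENNReal.toReal_ofReal ha]

lemma measurable_expNeg : Measurable expNeg := by
  unfold expNeg
  exact Measurable.ite (by simpa [Set.setOf_eq_eq_singleton] using measurableSet_singleton (⊤ : ℝ≥0∞))
    measurable_const (Real.measurable_exp.comp ENNReal.measurable_toReal.neg)

lemma sqrt_mul_exp_le {w : ℝ} (hw : 0 ≤ w) : Real.sqrt w * Real.exp (-w) ≤ 1 := by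
  have h2 : Real.sqrt w ≤ w + 1 := by
    nlinarith [Real.sq_sqrt hw, Real.sqrt_nonneg w]
  have h1 : Real.sqrt w ≤ Real.exp w := h2.trans (by linarith [Real.add_one_le_exp w])
  calc Real.sqrt w * Real.exp (-w) ≤ Real.exp w * Real.exp (-w) :=
        mul_le_mul_of_nonneg_right h1 (Real.exp_pos _).le
    _ = 1 := by rw [← Real.exp_add]; simp

lemma aux_sqrt_exp {u M : ℝ} (hu : 0 < u) (hM : 0 < M) :
    Real.sqrt u * Real.exp (-(M * u / 8)) ≤ Real.sqrt (8 / M) := by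
  have hw : 0 ≤ M * u / 8 := by positivity
  have key := sqrt_mul_exp_le hw
  have hrw : Real.sqrt u = Real.sqrt (8 / M) * Real.sqrt (M * u / 8) := by
    rw [← Real.sqrt_mul (by positivity)]
    congr 1
    field_simp
  rw [hrw]
  calc Real.sqrt (8 / M) * Real.sqrt (M * u / 8) * Real.exp (-(M * u / 8))
      = Real.sqrt (8 / M) * (Real.sqrt (M * u / 8) * Real.exp (-(M * u / 8))) := by ring
    _ ≤ Real.sqrt (8 / M) * 1 := mul_le_mul_of_nonneg_left key (Real.sqrt_nonneg _)
    _ = _ := mul_one _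

open scoped NNReal in
lemma gauss_bounds (m a : ℝ) (v : NNReal) (hv : (0:ℝ) < v) {r : ℝ} (hrpos : 0 < r) :
    (∫ t, Real.exp (-((a - t)^2 / (2*r))) ∂(gaussianReal m v) ≤ Real.sqrt (r / v)) ∧
    (∫ t, Real.exp (-((a - t)^2 / (2*r))) ∂(gaussianReal m v) ≤
      Real.exp (-((a - m)^2 / (8*r))) + Real.sqrt (r / v) * Real.exp (-((a - m)^2 / (8*(v:ℝ))))) := by
  have hv0 : v ≠ 0 := by
    intro h; rw [h] at hv; simp at hv
  set G : ℝ → ℝ := fun t => Real.exp (-((a - t)^2 / (2*r))) with hGdef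
  set pdf : ℝ → ℝ := gaussianPDFReal m v with hpdfdef
  have hpdfnn : ∀ t, 0 ≤ pdf t := gaussianPDFReal_nonneg m v
  have hpdfmeas : Measurable pdf := measurable_gaussianPDFReal m v
  set C : ℝ := (Real.sqrt (2 * Real.pi * v))⁻¹ with hCdef
  have hvne : (v:ℝ) ≠ 0 := ne_of_gt hv
  have h2piv : (0:ℝ) < 2 * Real.pi * v := mul_pos (by positivity) hv
  have hCpos : 0 < C := by
    rw [hCdef]
    exact inv_pos.mpr (Real.sqrt_pos.mpr h2piv)
  have hpdf_eq : ∀ t, pdf t = C * Real.exp (-(t - m)^2 / (2*(v:ℝ))) := fun t => rfl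
  have hpdf_le : ∀ t, pdf t ≤ C := by
    intro t
    rw [hpdf_eq t]
    calc C * Real.exp (-(t - m)^2 / (2*(v:ℝ))) ≤ C * 1 := by
          refine mul_le_mul_of_nonneg_left ?_ hCpos.le
          refine Real.exp_le_one_iff.mpr ?_
          apply div_nonpos_of_nonpos_of_nonneg (neg_nonpos.mpr (sq_nonneg _))
          positivity
      _ = C := mul_one _
  -- rewrite the gaussian integral as an integral against the pdf
  have hrw : ∫ t, G t ∂(gaussianReal m v) = ∫ t, pdf t * G t := by
    rw [gaussianReal_of_var_ne_zero m hv0]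
    have : (gaussianPDF m v) = fun t => ((pdf t).toNNReal : ℝ≥0∞) := rfl
    rw [this, integral_withDensity_eq_integral_smul (hpdfmeas.real_toNNReal) G]
    congr 1; ext t
    rw [NNReal.smul_def, Real.coe_toNNReal _ (hpdfnn t), smul_eq_mul]
  -- integrability of G
  have hb : (0:ℝ) < (2*r)⁻¹ := by positivity
  have hGrw : G = (fun u : ℝ => Real.exp (-(2*r)⁻¹ * u^2)) ∘ (fun t => t - a) := by
    ext t
    simp only [Function.comp_apply, hGdef]
    congr 1
    rw [show (a - t)^2 = (t - a)^2 by ring]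
    field_simp
  have hGint : Integrable G := by
    rw [hGrw]
    exact Integrable.comp_sub_right (integrable_exp_neg_mul_sq hb) a
  have hGnn : ∀ t, 0 ≤ G t := fun t => (Real.exp_pos _).le
  have hGvol : ∫ t, G t = Real.sqrt (2 * Real.pi * r) := by
    rw [hGrw]
    simp only [Function.comp]
    rw [integral_sub_right_eq_self (μ := volume) (fun u : ℝ => Real.exp (-(2*r)⁻¹ * u^2)) a]
    rw [integral_gaussian]
    congr 1
    rw [div_inv_eq_mul]
    ring
  have hCs : C * Real.sqrt (2 * Real.pi * r) = Real.sqrt (r / v) := by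
    rw [hCdef, ← Real.sqrt_inv, ← Real.sqrt_mul (by positivity)]
    congr 1
    have hπ : Real.pi ≠ 0 := Real.pi_ne_zero
    field_simp [hvne]
  have hpGint : Integrable (fun t => pdf t * G t) :=
    hGint.bdd_mul hpdfmeas.aestronglyMeasurable
      (ae_of_all _ fun t => by rw [Real.norm_eq_abs, abs_of_nonneg (hpdfnn t)]; exact hpdf_le t)
  constructor
  · -- first bound
    rw [hrw]
    calc ∫ t, pdf t * G t ≤ ∫ t, C * G t := by
          refine integral_mono hpGint (hGint.const_mul C) fun t => ?_
          exact mul_le_mul_of_nonneg_right (hpdf_le t) (hGnn t)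
      _ = C * ∫ t, G t := integral_const_mul C G
      _ = Real.sqrt (r / v) := by rw [hGvol, hCs]
  · -- second bound
    rw [hrw]
    set E1 : ℝ := Real.exp (-((a - m)^2 / (8*r))) with hE1
    set E2 : ℝ := Real.exp (-((a - m)^2 / (8*(v:ℝ)))) with hE2
    have hpt : ∀ t, pdf t * G t ≤ E1 * pdf t + (C * E2) * G t := by
      intro t
      rcases le_or_gt (|a - m| / 2) (|a - t|) with h | h
      · have hsq : (a-m)^2 / 4 ≤ (a-t)^2 := by
          have h1 : (|a - m| / 2)^2 ≤ (|a - t|)^2 := by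
            refine pow_le_pow_left₀ (by positivity) h 2
          rw [sq_abs] at h1
          calc (a-m)^2/4 = (|a-m|/2)^2 := by rw [div_pow, sq_abs]; norm_num
            _ ≤ (a-t)^2 := h1
        have hG_le : G t ≤ E1 := by
          refine Real.exp_le_exp.mpr ?_
          rw [neg_le_neg_iff]
          rw [div_le_div_iff₀ (by positivity) (by positivity)]
          nlinarith
        calc pdf t * G t ≤ pdf t * E1 := mul_le_mul_of_nonneg_left hG_le (hpdfnn t)
          _ = E1 * pdf t := mul_comm _ _
          _ ≤ E1 * pdf t + (C * E2) * G t := le_add_of_nonneg_right (mul_nonneg (mul_nonneg hCpos.le (Real.exp_pos _).le) (hGnn t))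
      · have htm : |a - m| / 2 ≤ |t - m| := by
          have h3 : |a - m| ≤ |a - t| + |t - m| := by
            calc |a - m| = |(a - t) + (t - m)| := by ring_nf
              _ ≤ |a - t| + |t - m| := abs_add_le _ _
          linarith
        have hsq : (a-m)^2 / 4 ≤ (t-m)^2 := by
          have h1 : (|a - m| / 2)^2 ≤ (|t - m|)^2 := pow_le_pow_left₀ (by positivity) htm 2
          rw [sq_abs] at h1
          calc (a-m)^2/4 = (|a-m|/2)^2 := by rw [div_pow, sq_abs]; norm_num
            _ ≤ (t-m)^2 := h1
        have hpdf_le2 : pdf t ≤ C * E2 := by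
          rw [hpdf_eq t]
          refine mul_le_mul_of_nonneg_left ?_ hCpos.le
          refine Real.exp_le_exp.mpr ?_
          rw [neg_div, neg_le_neg_iff]
          rw [div_le_div_iff₀ (mul_pos (by norm_num) hv) (mul_pos (by norm_num) hv)]
          have hmul := mul_le_mul_of_nonneg_right hsq hv.le
          nlinarith [hmul]
        calc pdf t * G t ≤ (C * E2) * G t := mul_le_mul_of_nonneg_right hpdf_le2 (hGnn t)
          _ ≤ E1 * pdf t + (C * E2) * G t := le_add_of_nonneg_left (mul_nonneg (Real.exp_pos _).le (hpdfnn t))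
    calc ∫ t, pdf t * G t ≤ ∫ t, (E1 * pdf t + (C * E2) * G t) := by
          refine integral_mono hpGint ?_ hpt
          exact ((integrable_gaussianPDFReal m v).const_mul E1).add (hGint.const_mul _)
      _ = E1 * (∫ t, pdf t) + (C * E2) * ∫ t, G t := by
          rw [integral_add ((integrable_gaussianPDFReal m v).const_mul E1) (hGint.const_mul _),
            integral_const_mul, integral_const_mul]
      _ = E1 + Real.sqrt (r / v) * E2 := by
          rw [show (∫ t, pdf t) = 1 from integral_gaussianPDFReal_eq_one m hv0, hGvol]
          rw [mul_one]
          rw [show C * E2 * Real.sqrt (2*Real.pi*r) = C * Real.sqrt (2*Real.pi*r) * E2 by ring, hCs]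

theorem stmt15 (e : HilbertBasis ℕ ℝ H) (p r : ℕ → ℝ)
    (hp : ∀ i, 0 < p i) (hr : ∀ i, 0 < r i) (hps : Summable p)
    (mf : H) (Pf R : H →L[ℝ] H)
    (hPe : ∀ i, Pf (e i) = p i • e i) (hRe : ∀ i, R (e i) = r i • e i)
    (hRsa : IsSelfAdjoint R) (hRpos : ∀ u, 0 ≤ ⟪R u, u⟫_ℝ)
    (hcomm : Pf ∘L R = R ∘L Pf)
    (μf : Measure H) [IsProbabilityMeasure μf] (hG : IsGaussianMeasure μf mf Pf)
    (hinf : ⨅ i, r i = 0) :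
    Dense {y : H | ∫ x, expNeg (qformDiag e r (y - x) / 2) ∂μf = 0} := by
  intro z
  rw [Metric.mem_closure_iff]
  intro ε hε
  set δ : ℝ := ε / 4 with hδdef
  have hδpos : 0 < δ := by positivity
  -- choice of small indices
  have hex : ∀ c : ℝ, 0 < c → ∃ i, r i < c := by
    intro c hc
    apply exists_lt_of_ciInf_lt
    rw [hinf]; exact hc
  choose F hF using hex
  let ι : ℕ → ℕ := fun k => Nat.rec (F (δ^2) (by positivity))
    (fun k ik => F (min (δ^2 * (64:ℝ)⁻¹^(k+1)) (r ik)) (lt_min (by positivity) (hr ik))) k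
  have hι1 : ∀ k, r (ι k) < δ^2 * (64:ℝ)⁻¹^k := by
    intro k
    cases k with
    | zero => rw [pow_zero, mul_one]; exact hF (δ^2) (by positivity)
    | succ k => exact (hF _ _).trans_le (min_le_left _ _)
  have hι2 : ∀ k, r (ι (k+1)) < r (ι k) := fun k => (hF _ _).trans_le (min_le_right _ _)
  have hinj : Function.Injective ι := by
    have hanti : StrictAnti (fun k => r (ι k)) := strictAnti_nat_of_succ_lt hι2
    intro a b hab
    exact hanti.injective (by simp only [hab])
  -- perturbation
  set cc : ℕ → ℝ := fun i => ⟪e i, z - mf⟫_ℝ with hccdef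
  set w : ℕ → ℝ := fun k => (if 0 ≤ cc (ι k) then 1 else -1) * (2^k * Real.sqrt (r (ι k)))
    with hwdef
  have hwabs : ∀ k, |w k| = 2^k * Real.sqrt (r (ι k)) := by
    intro k
    have h1 : |(if 0 ≤ cc (ι k) then (1:ℝ) else -1)| = 1 := by split <;> simp
    rw [hwdef, abs_mul, h1, one_mul, abs_of_nonneg (by positivity)]
  have hsqrt_le : ∀ k, Real.sqrt (r (ι k)) ≤ δ * (8:ℝ)⁻¹^k := by
    intro k
    have hid : δ^2 * (64:ℝ)⁻¹^k = (δ * (8:ℝ)⁻¹^k)^2 := by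
      rw [show ((64:ℝ))⁻¹ = 8⁻¹*8⁻¹ by norm_num, mul_pow]; ring
    calc Real.sqrt (r (ι k)) ≤ Real.sqrt ((δ * (8:ℝ)⁻¹^k)^2) :=
          Real.sqrt_le_sqrt (by rw [← hid]; exact (hι1 k).le)
      _ = δ * (8:ℝ)⁻¹^k := Real.sqrt_sq (by positivity)
  have hwle : ∀ k, |w k| ≤ δ * (4:ℝ)⁻¹^k := by
    intro k
    rw [hwabs k]
    calc (2:ℝ)^k * Real.sqrt (r (ι k)) ≤ 2^k * (δ * (8:ℝ)⁻¹^k) :=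
          mul_le_mul_of_nonneg_left (hsqrt_le k) (by positivity)
      _ = δ * (2 * (8:ℝ)⁻¹)^k := by rw [mul_pow]; ring
      _ = δ * (4:ℝ)⁻¹^k := by norm_num
  have hsum4 : Summable (fun k => δ * (4:ℝ)⁻¹^k) :=
    (summable_geometric_of_lt_one (by norm_num) (by norm_num)).mul_left δ
  have hnormeq : ∀ k, ‖w k • e (ι k)‖ = |w k| := by
    intro k
    rw [norm_smul, e.orthonormal.1 (ι k), mul_one, Real.norm_eq_abs]
  have hnormsum : Summable (fun k => ‖w k • e (ι k)‖) := by
    refine Summable.of_nonneg_of_le (fun k => norm_nonneg _) (fun k => ?_) hsum4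
    rw [hnormeq k]; exact hwle k
  have hvsum : Summable (fun k => w k • e (ι k)) := hnormsum.of_norm
  set y : H := z + ∑' k, w k • e (ι k) with hydef
  refine ⟨y, ?_, ?_⟩
  swap
  · -- distance bound
    have h1 : dist z y = ‖∑' k, w k • e (ι k)‖ := by
      rw [dist_eq_norm, hydef]
      simp
    rw [h1]
    calc ‖∑' k, w k • e (ι k)‖ ≤ ∑' k, ‖w k • e (ι k)‖ := norm_tsum_le_tsum_norm hnormsum
      _ ≤ ∑' k, δ * (4:ℝ)⁻¹^k := by
          refine hnormsum.tsum_le_tsum (fun k => ?_) hsum4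
          rw [hnormeq k]; exact hwle k
      _ = δ * (1 - 4⁻¹)⁻¹ := by
          rw [tsum_mul_left, tsum_geometric_of_lt_one (by norm_num) (by norm_num)]
      _ < ε := by rw [hδdef]; linarith
  -- membership
  show (∫ x, expNeg (qformDiag e r (y - x) / 2) ∂μf) = 0
  -- inner products with y
  have hiy : ∀ k, ⟪e (ι k), y⟫_ℝ = ⟪e (ι k), z⟫_ℝ + w k := by
    intro k
    rw [hydef, inner_add_right]
    congr 1
    have hmap : ⟪e (ι k), ∑' j, w j • e (ι j)⟫_ℝ = ∑' j, ⟪e (ι k), w j • e (ι j)⟫_ℝ :=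
      ((hvsum.hasSum.mapL (innerSL ℝ (e (ι k)))).tsum_eq).symm
    rw [hmap, tsum_eq_single k ?_]
    · rw [real_inner_smul_right, orthonormal_iff_ite.mp e.orthonormal, if_pos rfl, mul_one]
    · intro j hj
      rw [real_inner_smul_right, orthonormal_iff_ite.mp e.orthonormal,
        if_neg (fun h => hj ((hinj h).symm)), mul_zero]
  have hd2 : ∀ k, (4:ℝ)^k * r (ι k) ≤ (⟪e (ι k), y⟫_ℝ - ⟪e (ι k), mf⟫_ℝ)^2 := by
    intro k
    have hsplit : ⟪e (ι k), y⟫_ℝ - ⟪e (ι k), mf⟫_ℝ = cc (ι k) + w k := by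
      rw [hiy k, hccdef]
      simp only [inner_sub_right]
      ring
    rw [hsplit]
    have hsnn : (0:ℝ) ≤ 2^k * Real.sqrt (r (ι k)) := by positivity
    have hs2 : (2^k * Real.sqrt (r (ι k)))^2 = 4^k * r (ι k) := by
      rw [mul_pow, Real.sq_sqrt (hr _).le]
      congr 1
      rw [← pow_mul, mul_comm, pow_mul]
      norm_num
    rw [← hs2]
    simp only [hwdef]
    split_ifs with hc
    · nlinarith [hsnn]
    · push_neg at hc
      nlinarith [hsnn]
  -- variance computation
  have hvari : ∀ i, ⟪e i, Pf (e i)⟫_ℝ = p i := by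
    intro i
    rw [hPe i, real_inner_smul_right, orthonormal_iff_ite.mp e.orthonormal, if_pos rfl, mul_one]
  -- measurability and integrability of the integrand
  have hfmeas : Measurable (fun x : H => expNeg (qformDiag e r (y - x) / 2)) := by
    refine measurable_expNeg.comp (Measurable.div_const ?_ 2)
    refine Measurable.ennreal_tsum (fun j => ?_)
    refine Measurable.ennreal_ofReal ?_
    exact ((((continuous_const.sub continuous_id).inner
      continuous_const).pow 2).div_const (r j)).measurable
  have hfint : Integrable (fun x : H => expNeg (qformDiag e r (y - x) / 2)) μf := by
    refine Integrable.mono' (integrable_const 1) hfmeas.aestronglyMeasurable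
      (ae_of_all _ fun x => ?_)
    rw [Real.norm_eq_abs, abs_of_nonneg (expNeg_nonneg _)]
    exact expNeg_le_one _
  -- the bound sequence
  set B : ℕ → ℝ := fun k =>
    (2:ℝ)⁻¹^k + (Real.exp (-((4:ℝ)^k/8)) + Real.sqrt 8 * (2:ℝ)⁻¹^k) with hBdef
  have hpow1 : ∀ k, ((2:ℝ)⁻¹^k)^2 = (4:ℝ)⁻¹^k := by
    intro k
    rw [← pow_mul, mul_comm, pow_mul]
    norm_num
  have hIle : ∀ k, (∫ x, expNeg (qformDiag e r (y - x) / 2) ∂μf) ≤ B k := by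
    intro k
    set i : ℕ := ι k with hidef
    set a : ℝ := ⟪e i, y⟫_ℝ with hadef
    set m' : ℝ := ⟪e i, mf⟫_ℝ with hm'def
    set g : H → ℝ := fun x => Real.exp (-((a - ⟪e i, x⟫_ℝ)^2/(2 * r i))) with hgdef
    have hgcont : Continuous g := by
      refine Real.continuous_exp.comp (Continuous.neg ?_)
      exact ((continuous_const.sub (continuous_const.inner continuous_id)).pow 2).div_const _
    have hgint : Integrable g μf := by
      refine Integrable.mono' (integrable_const 1) hgcont.aestronglyMeasurable
        (ae_of_all _ fun x => ?_)
      rw [Real.norm_eq_abs, abs_of_nonneg (Real.exp_pos _).le]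
      refine Real.exp_le_one_iff.mpr ?_
      simp only [Left.neg_nonpos_iff]
      exact div_nonneg (sq_nonneg _) (by linarith [hr i])
    have hptle : ∀ x, expNeg (qformDiag e r (y - x) / 2) ≤ g x := by
      intro x
      have hip : ⟪y - x, e i⟫_ℝ = a - ⟪e i, x⟫_ℝ := by
        rw [real_inner_comm, inner_sub_right]
      have hterm : ENNReal.ofReal ((a - ⟪e i, x⟫_ℝ)^2 / r i) ≤ qformDiag e r (y - x) := by
        rw [show qformDiag e r (y - x) = ∑' j, ENNReal.ofReal (⟪y - x, e j⟫_ℝ^2 / r j) from rfl]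
        refine le_trans (le_of_eq ?_) (ENNReal.le_tsum i)
        rw [hip]
      have h2 : ENNReal.ofReal ((a - ⟪e i, x⟫_ℝ)^2 / (2 * r i)) ≤ qformDiag e r (y - x) / 2 := by
        have heq : ENNReal.ofReal ((a - ⟪e i, x⟫_ℝ)^2 / (2 * r i))
            = ENNReal.ofReal ((a - ⟪e i, x⟫_ℝ)^2 / r i) / 2 := by
          rw [show (a - ⟪e i, x⟫_ℝ)^2/(2*r i) = ((a - ⟪e i, x⟫_ℝ)^2/r i)/2 by ring,
            ENNReal.ofReal_div_of_pos (by norm_num), ENNReal.ofReal_ofNat]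
        rw [heq]
        exact ENNReal.div_le_div_right hterm 2
      calc expNeg (qformDiag e r (y - x) / 2)
          ≤ expNeg (ENNReal.ofReal ((a - ⟪e i, x⟫_ℝ)^2 / (2 * r i))) := expNeg_anti h2
        _ = g x := expNeg_ofReal (div_nonneg (sq_nonneg _) (by linarith [hr i]))
    have hstep2 : (∫ x, expNeg (qformDiag e r (y - x) / 2) ∂μf) ≤ ∫ x, g x ∂μf :=
      integral_mono hfint hgint hptle
    -- push forward
    have hφcont : Continuous (fun x : H => ⟪e i, x⟫_ℝ) := continuous_const.inner continuous_id
    have hGsm : AEStronglyMeasurable (fun t : ℝ => Real.exp (-((a - t)^2/(2 * r i))))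
        (μf.map (fun x : H => ⟪e i, x⟫_ℝ)) := by
      refine Continuous.aestronglyMeasurable ?_
      exact Real.continuous_exp.comp
        (((continuous_const.sub continuous_id).pow 2).div_const _).neg
    have hstep3 : (∫ x, g x ∂μf)
        = ∫ t, Real.exp (-((a - t)^2/(2 * r i))) ∂(gaussianReal m' ((p i).toNNReal)) := by
      have hmap2 : μf.map (fun x : H => ⟪e i, x⟫_ℝ) = gaussianReal m' ((p i).toNNReal) := by
        rw [hG (e i), hvari i]
      rw [← hmap2, integral_map hφcont.measurable.aemeasurable hGsm]
    rw [hstep3] at hstep2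
    have hco : (((p i).toNNReal : ℝ)) = p i := Real.coe_toNNReal _ (hp i).le
    have hvpos : (0:ℝ) < ((p i).toNNReal : ℝ) := by rw [hco]; exact hp i
    have hgb := gauss_bounds m' a ((p i).toNNReal) hvpos (hr i)
    rw [hco] at hgb
    have hd2k : (4:ℝ)^k * r i ≤ (a - m')^2 := hd2 k
    by_cases hcase : r i ≤ p i * (4:ℝ)⁻¹^k
    · -- small ratio case: use first bound
      have h1 : Real.sqrt (r i / p i) ≤ (2:ℝ)⁻¹^k := by
        have hrp : r i / p i ≤ ((2:ℝ)⁻¹^k)^2 := by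
          rw [hpow1 k, div_le_iff₀ (hp i)]
          linarith [hcase]
        calc Real.sqrt (r i / p i) ≤ Real.sqrt (((2:ℝ)⁻¹^k)^2) := Real.sqrt_le_sqrt hrp
          _ = (2:ℝ)⁻¹^k := Real.sqrt_sq (by positivity)
      have hBk : (2:ℝ)⁻¹^k ≤ B k := by
        rw [hBdef]
        have : (0:ℝ) ≤ Real.exp (-((4:ℝ)^k/8)) + Real.sqrt 8 * (2:ℝ)⁻¹^k := by positivity
        linarith
      exact hstep2.trans (hgb.1.trans (h1.trans hBk))
    · -- large ratio case: use second bound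
      push_neg at hcase
      have hT1 : Real.exp (-((a - m')^2 / (8 * r i))) ≤ Real.exp (-((4:ℝ)^k/8)) := by
        refine Real.exp_le_exp.mpr (neg_le_neg ?_)
        rw [div_le_div_iff₀ (by norm_num) (by linarith [hr i] : (0:ℝ) < 8 * r i)]
        nlinarith [hd2k, hr i]
      have hT2 : Real.sqrt (r i / p i) * Real.exp (-((a - m')^2 / (8 * p i)))
          ≤ Real.sqrt 8 * (2:ℝ)⁻¹^k := by
        have hstep : Real.exp (-((a - m')^2 / (8 * p i)))
            ≤ Real.exp (-((4:ℝ)^k * (r i / p i) / 8)) := by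
          refine Real.exp_le_exp.mpr (neg_le_neg ?_)
          rw [show (4:ℝ)^k * (r i / p i) / 8 = ((4:ℝ)^k * r i) / (8 * p i) by
            field_simp]
          exact (div_le_div_iff_of_pos_right (mul_pos (by norm_num) (hp i))).mpr hd2k
        have haux := aux_sqrt_exp (u := r i / p i) (M := (4:ℝ)^k)
          (div_pos (hr i) (hp i)) (by positivity)
        have hsq8 : Real.sqrt (8 / (4:ℝ)^k) = Real.sqrt 8 * (2:ℝ)⁻¹^k := by
          rw [show (8:ℝ) / (4:ℝ)^k = 8 * ((2:ℝ)⁻¹^k)^2 by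
            rw [hpow1 k, inv_pow]; ring]
          rw [Real.sqrt_mul (by norm_num), Real.sqrt_sq (by positivity)]
        calc Real.sqrt (r i / p i) * Real.exp (-((a - m')^2 / (8 * p i)))
            ≤ Real.sqrt (r i / p i) * Real.exp (-((4:ℝ)^k * (r i / p i) / 8)) :=
              mul_le_mul_of_nonneg_left hstep (Real.sqrt_nonneg _)
          _ ≤ Real.sqrt (8 / (4:ℝ)^k) := haux
          _ = Real.sqrt 8 * (2:ℝ)⁻¹^k := hsq8
      have hBk : Real.exp (-((4:ℝ)^k/8)) + Real.sqrt 8 * (2:ℝ)⁻¹^k ≤ B k := by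
        rw [hBdef]
        have : (0:ℝ) ≤ (2:ℝ)⁻¹^k := by positivity
        linarith
      refine hstep2.trans (hgb.2.trans ?_)
      calc Real.exp (-((a - m')^2 / (8 * r i)))
            + Real.sqrt (r i / p i) * Real.exp (-((a - m')^2 / (8 * p i)))
          ≤ Real.exp (-((4:ℝ)^k/8)) + Real.sqrt 8 * (2:ℝ)⁻¹^k := add_le_add hT1 hT2
        _ ≤ B k := hBk
  -- conclude: integral ≤ B k → 0
  have hBlim : Filter.Tendsto B Filter.atTop (nhds 0) := by
    have t1 : Filter.Tendsto (fun k : ℕ => (2:ℝ)⁻¹^k) Filter.atTop (nhds 0) :=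
      tendsto_pow_atTop_nhds_zero_of_lt_one (by norm_num) (by norm_num)
    have t2 : Filter.Tendsto (fun k : ℕ => Real.exp (-((4:ℝ)^k/8))) Filter.atTop (nhds 0) := by
      refine Real.tendsto_exp_atBot.comp ?_
      refine Filter.tendsto_neg_atTop_atBot.comp ?_
      exact (tendsto_pow_atTop_atTop_of_one_lt (by norm_num : (1:ℝ) < 4)).atTop_div_const
        (by norm_num)
    have h := t1.add (t2.add (t1.const_mul (Real.sqrt 8)))
    rw [hBdef]
    simpa using h
  have hle0 : (∫ x, expNeg (qformDiag e r (y - x) / 2) ∂μf) ≤ 0 :=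
    ge_of_tendsto hBlim (Filter.Eventually.of_forall hIle)
  have hge0 : 0 ≤ (∫ x, expNeg (qformDiag e r (y - x) / 2) ∂μf) :=
    integral_nonneg (fun x => expNeg_nonneg _)
  linarith
end
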